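/- Multiplicative Dirichlet theorem for systems of linear forms: let m, n ∈ ℕ, k = m + n, and suppose t_1, ..., t_k are nonnegative integers with t_1 + ... + t_m = t_{m+1} + ... + t_{m+n}. For any m linear forms Y_1, ..., Y_m over F = F_q((T⁻¹)) in n variables, there exist q = (q_1, ..., q_n) ∈ Λ^n \ {0} and p = (p_1, ..., p_m) ∈ Λ^m such that |Y_i(q) − p_i| < e^{−t_i} for i = 1, ..., m and |q_j| ≤ e^{t_{m+j}} for j = 1, ..., n. -/

import Mathlib

open scoped Classical in
/-- The absolute value `|a| = e^(deg a)` on `F = F_q((T⁻¹))`.  We realize `F` as the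
field of Laurent series `F_q((X))` via `X = T⁻¹`, so that `deg a = −(order a)`. -/
noncomputable def lAbs {Fq : Type*} [Field Fq] (a : LaurentSeries Fq) : ℝ :=
  if a = 0 then 0 else Real.exp (-(a.order : ℝ))

/-- The element `T ∈ F = F_q((T⁻¹))` (i.e. `X⁻¹` in the Laurent series realization). -/
noncomputable def Tvar (Fq : Type*) [Field Fq] : LaurentSeries Fq :=
  HahnSeries.single (-1 : ℤ) 1

/-- The embedding of `Λ = F_q[T]` into `F = F_q((T⁻¹))`, sending a polynomial `p` to `p(T)`. -/
noncomputable def polyToF {Fq : Type*} [Field Fq] (p : Polynomial Fq) : LaurentSeries Fq :=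
  Polynomial.aeval (Tvar Fq) p

section Aux

variable {Fq : Type*} [Field Fq]

lemma Tvar_pow (k : ℕ) : Tvar Fq ^ k = HahnSeries.single (-(k : ℤ)) 1 := by
  induction k with
  | zero => simp [HahnSeries.single_zero_one]
  | succ k ih =>
    rw [pow_succ, ih, Tvar, HahnSeries.single_mul_single, mul_one]
    congr 1
    push_cast
    ring_nf

lemma algebraMap_laurent (a : Fq) :
    (algebraMap Fq (LaurentSeries Fq)) a = HahnSeries.single (0 : ℤ) a := by
  rw [HahnSeries.algebraMap_apply']
  rw [← PowerSeries.C_eq_algebraMap, HahnSeries.ofPowerSeries_C, HahnSeries.C_apply]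

lemma polyToF_single (a : Fq) (k : ℕ) :
    polyToF (Polynomial.C a * Polynomial.X ^ k) = HahnSeries.single (-(k : ℤ)) a := by
  rw [polyToF, map_mul, map_pow, Polynomial.aeval_C, Polynomial.aeval_X, Tvar_pow,
    algebraMap_laurent, HahnSeries.single_mul_single, zero_add, mul_one]

lemma laurent_sum_coeff {ι : Type*} (S : Finset ι) (f : ι → LaurentSeries Fq) (d : ℤ) :
    (∑ i ∈ S, f i).coeff d = ∑ i ∈ S, (f i).coeff d :=
  map_sum (HahnSeries.coeff.addMonoidHom d) f S

lemma coeff_mul_single (x : LaurentSeries Fq) (g d : ℤ) (r : Fq) :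
    (x * HahnSeries.single g r).coeff d = (x * HahnSeries.single g 1).coeff d * r := by
  rw [show (HahnSeries.single g r : LaurentSeries Fq)
        = HahnSeries.single g 1 * HahnSeries.single 0 r by
      rw [HahnSeries.single_mul_single, add_zero, one_mul],
    ← mul_assoc, HahnSeries.coeff_mul_single_zero]

end Aux

/-- the multiplicative Dirichlet theorem for systems of linear forms.
Given nonnegative integers `t_1,...,t_m` and `s_1,...,s_n` with `∑ t = ∑ s`, and `m`
linear forms over `F = F_q((T⁻¹))` in `n` variables (the rows of the matrix `Y`),
there exist `q ∈ Λ^n \ {0}` and `p ∈ Λ^m` with `|Y_i q − p_i| < e^(−t_i)` for all `i`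
and `|q_j| ≤ e^(s_j)` for all `j`. -/
theorem multiplicative_dirichlet {Fq : Type*} [Field Fq] [Fintype Fq]
    (m n : ℕ) (hm : 0 < m) (hn : 0 < n)
    (t : Fin m → ℕ) (s : Fin n → ℕ) (hts : ∑ i, t i = ∑ j, s j)
    (Y : Matrix (Fin m) (Fin n) (LaurentSeries Fq)) :
    ∃ q : Fin n → Polynomial Fq, q ≠ 0 ∧ ∃ p : Fin m → Polynomial Fq,
      (∀ i, lAbs (∑ j, Y i j * polyToF (q j) - polyToF (p i)) < Real.exp (-(t i : ℝ))) ∧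
      (∀ j, lAbs (polyToF (q j)) ≤ Real.exp (s j : ℝ)) := by
  classical
  -- the polynomial tuple associated to a coefficient vector
  set Q : (∀ j : Fin n, Fin (s j + 1) → Fq) → Fin n → Polynomial Fq :=
    fun c j => ∑ k : Fin (s j + 1), Polynomial.C (c j k) * Polynomial.X ^ (k : ℕ) with hQ
  have hQF : ∀ c j, polyToF (Q c j)
      = ∑ k : Fin (s j + 1), HahnSeries.single (-((k : ℕ) : ℤ)) (c j k) := by
    intro c j
    rw [hQ, polyToF, map_sum]
    exact Finset.sum_congr rfl fun k _ => polyToF_single (c j k) (k : ℕ)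
  -- expansion of the relevant coefficients as linear expressions in `c`
  have expand : ∀ c i (d : ℤ), (∑ j, Y i j * polyToF (Q c j)).coeff d
      = ∑ j, ∑ k' : Fin (s j + 1),
          (Y i j * HahnSeries.single (-((k' : ℕ) : ℤ)) 1).coeff d * c j k' := by
    intro c i d
    rw [laurent_sum_coeff]
    refine Finset.sum_congr rfl fun j _ => ?_
    rw [hQF, Finset.mul_sum, laurent_sum_coeff]
    exact Finset.sum_congr rfl fun k' _ => coeff_mul_single _ _ _ _
  -- the linear map recording the coefficients that must vanish
  let φ : (∀ j : Fin n, Fin (s j + 1) → Fq) →ₗ[Fq] (∀ i : Fin m, Fin (t i) → Fq) :=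
    { toFun := fun c i k => (∑ j, Y i j * polyToF (Q c j)).coeff (((k : ℕ) : ℤ) + 1)
      map_add' := by
        intro c c'
        funext i k
        simp only [expand, Pi.add_apply, mul_add, Finset.sum_add_distrib]
      map_smul' := by
        intro a c
        funext i k
        simp only [expand, Pi.smul_apply, smul_eq_mul, Finset.mul_sum, RingHom.id_apply,
          mul_left_comm] }
  -- pigeonhole : the kernel of φ is nontrivial
  have hVrank : Module.finrank Fq (∀ j : Fin n, Fin (s j + 1) → Fq) = (∑ j, s j) + n := by
    rw [Module.finrank_pi_fintype]
    simp [Module.finrank_fintype_fun_eq_card, Finset.sum_add_distrib]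
  have hWrank : Module.finrank Fq (∀ i : Fin m, Fin (t i) → Fq) = ∑ i, t i := by
    rw [Module.finrank_pi_fintype]
    simp [Module.finrank_fintype_fun_eq_card]
  have hlt : Module.finrank Fq (∀ i : Fin m, Fin (t i) → Fq)
      < Module.finrank Fq (∀ j : Fin n, Fin (s j + 1) → Fq) := by
    rw [hVrank, hWrank, hts]
    omega
  obtain ⟨c, hcker, hc0⟩ := Submodule.ne_bot_iff _ |>.mp
    (LinearMap.ker_ne_bot_of_finrank_lt (f := φ) hlt)
  have hφc : φ c = 0 := hcker
  have hker : ∀ i (k : Fin (t i)),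
      (∑ j, Y i j * polyToF (Q c j)).coeff (((k : ℕ) : ℤ) + 1) = 0 := by
    intro i k
    exact congrFun (congrFun hφc i) k
  -- the coefficients of `Q c j`
  have hQcoeff : ∀ j (k : Fin (s j + 1)), (Q c j).coeff (k : ℕ) = c j k := by
    intro j k
    rw [hQ]
    simp only [Polynomial.finset_sum_coeff, Polynomial.coeff_C_mul, Polynomial.coeff_X_pow]
    rw [Finset.sum_eq_single k]
    · simp
    · intro b _ hb
      rw [if_neg fun h => hb (Fin.ext h.symm), mul_zero]
    · intro h
      exact absurd (Finset.mem_univ k) h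
  -- `Q c ≠ 0`
  have hQne : Q c ≠ 0 := by
    intro h
    apply hc0
    funext j k
    have := hQcoeff j k
    rw [congrFun h j] at this
    simpa using this.symm
  refine ⟨Q c, hQne, ?_⟩
  -- positive coefficients of the forms vanish up to `t i`
  have hApos : ∀ i (d : ℤ), 0 < d → d ≤ (t i : ℤ) →
      (∑ j, Y i j * polyToF (Q c j)).coeff d = 0 := by
    intro i d hd hdt
    have hk : d.toNat - 1 < t i := by omega
    have h := hker i ⟨d.toNat - 1, hk⟩
    have he : (((d.toNat - 1 : ℕ) : ℤ)) + 1 = d := by omega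
    rwa [he] at h
  -- construct the polynomial vector p
  set A : Fin m → LaurentSeries Fq := fun i => ∑ j, Y i j * polyToF (Q c j) with hA
  set N : Fin m → ℕ := fun i => (1 - (A i).order).toNat with hN
  set p : Fin m → Polynomial Fq := fun i =>
    ∑ k ∈ Finset.range (N i), Polynomial.C ((A i).coeff (-(k : ℤ))) * Polynomial.X ^ k with hp
  have hpF : ∀ i, polyToF (p i)
      = ∑ k ∈ Finset.range (N i), HahnSeries.single (-(k : ℤ)) ((A i).coeff (-(k : ℤ))) := by
    intro i
    rw [hp, polyToF, map_sum]
    exact Finset.sum_congr rfl fun k _ => polyToF_single _ _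
  -- coefficients of polyToF (p i)
  have hpcoeff_neg : ∀ i (d : ℤ), d ≤ 0 → (polyToF (p i)).coeff d = (A i).coeff d := by
    intro i d hd
    rw [hpF, laurent_sum_coeff]
    by_cases hdN : (-d).toNat < N i
    · rw [Finset.sum_eq_single (-d).toNat]
      · rw [show (-((-d).toNat : ℤ)) = d by omega]
        exact HahnSeries.coeff_single_same _ _
      · intro b _ hb
        exact HahnSeries.coeff_single_of_ne (by omega)
      · intro h
        exact absurd (Finset.mem_range.mpr hdN) h
    · have hz : ∀ b ∈ Finset.range (N i),
          (HahnSeries.single (-(b : ℤ)) ((A i).coeff (-(b : ℤ)))).coeff d = 0 := by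
        intro b hb
        rw [Finset.mem_range] at hb
        exact HahnSeries.coeff_single_of_ne (by omega)
      rw [Finset.sum_eq_zero hz]
      refine (HahnSeries.coeff_eq_zero_of_lt_order ?_).symm
      have : ¬ ((-d).toNat < (1 - (A i).order).toNat) := hdN
      omega
  have hpcoeff_pos : ∀ i (d : ℤ), 0 < d → (polyToF (p i)).coeff d = 0 := by
    intro i d hd
    rw [hpF, laurent_sum_coeff]
    refine Finset.sum_eq_zero fun b _ => ?_
    exact HahnSeries.coeff_single_of_ne (by omega)
  refine ⟨p, fun i => ?_, fun j => ?_⟩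
  · -- the approximation bound
    set B : LaurentSeries Fq := A i - polyToF (p i) with hB
    have hBcoeff : ∀ d : ℤ, d ≤ (t i : ℤ) → B.coeff d = 0 := by
      intro d hd
      rw [hB, HahnSeries.coeff_sub]
      rcases le_or_gt d 0 with h0 | h0
      · rw [hpcoeff_neg i d h0, sub_self]
      · rw [hApos i d h0 hd, hpcoeff_pos i d h0, sub_zero]
    by_cases hB0 : B = 0
    · rw [hB0]
      simp only [lAbs, if_pos rfl]
      exact Real.exp_pos _
    · have horder : (t i : ℤ) < B.order := by
        by_contra h
        push_neg at h
        exact (mt HahnSeries.coeff_order_eq_zero.mp hB0) (hBcoeff _ h)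
      simp only [lAbs, if_neg hB0]
      apply Real.exp_lt_exp.mpr
      have : ((t i : ℤ) : ℝ) < ((B.order : ℤ) : ℝ) := by exact_mod_cast horder
      push_cast at this ⊢
      linarith
  · -- the size bound on q
    by_cases hq0 : polyToF (Q c j) = 0
    · rw [hq0]
      simp only [lAbs, if_pos rfl]
      exact (Real.exp_pos _).le
    · have hcoeffz : ∀ d : ℤ, d < -((s j : ℕ) : ℤ) → (polyToF (Q c j)).coeff d = 0 := by
        intro d hd
        rw [hQF, laurent_sum_coeff]
        refine Finset.sum_eq_zero fun k' _ => ?_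
        refine HahnSeries.coeff_single_of_ne ?_
        have := k'.isLt
        omega
      have horder : -((s j : ℕ) : ℤ) ≤ (polyToF (Q c j)).order := by
        by_contra h
        push_neg at h
        exact (mt HahnSeries.coeff_order_eq_zero.mp hq0) (hcoeffz _ h)
      simp only [lAbs, if_neg hq0]
      apply Real.exp_le_exp.mpr
      have : (-((s j : ℕ) : ℤ) : ℝ) ≤ (((polyToF (Q c j)).order : ℤ) : ℝ) := by
        exact_mod_cast horder
      push_cast at this ⊢
      linarith
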